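/- Let K and L be torsion-free abelian groups, x_K ∈ K and x_L ∈ L nonzero elements, q a prime, and set G = (K ⊕ L) ⊕_{(x_K - x_L)} ℤ[1/q], H = (x_K - x_L)·ℤ[1/q] ⊆ G, M̂ = L + H. Then K ∩ M̂ = ⟨x_K⟩ (the cyclic group generated by x_K) and M̂ = L ⊕ H. -/

import Mathlib

/-- Let `K, L` be torsion-free abelian groups realized as independent subgroups of a
`ℚ`-vector space `V` (so `K ⊕ L ⊆ V`), `x_K ∈ K`, `x_L ∈ L` nonzero, `q` prime with
`x_K - x_L` `q`-pure in `K ⊕ L`.  With `H = (x_K - x_L)·ℤ[1/q]` and `M̂ = L + H`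
inside `G = (K ⊕ L) ⊕_{x_K - x_L} ℤ[1/q]`, we have `K ∩ M̂ = ⟨x_K⟩` and
`M̂ = L ⊕ H`. -/
theorem kernel_inter_Mhat_eq_and_direct
    {V : Type*} [AddCommGroup V] [Module ℚ V]
    (K L : AddSubgroup V) (hKL : K ⊓ L = ⊥)
    (xK xL : V) (hxK : xK ∈ K) (hxL : xL ∈ L) (hxK0 : xK ≠ 0) (hxL0 : xL ≠ 0)
    (q : ℕ) (hq : q.Prime)
    (hpure : ¬∃ y ∈ K ⊔ L, xK - xL = q • y)
    (H : AddSubgroup V)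
    (hH : H = AddSubgroup.closure
      (Set.range fun i : ℕ => ((q : ℚ) ^ i)⁻¹ • (xK - xL))) :
    K ⊓ (L ⊔ H) = AddSubgroup.zmultiples xK ∧ L ⊓ H = ⊥ := by
  have hq0 : (q : ℚ) ≠ 0 := Nat.cast_ne_zero.mpr hq.pos.ne'
  -- characterize elements of H
  have hHmem : ∀ v ∈ H, ∃ (m : ℤ) (i : ℕ),
      ((q : ℚ) ^ i) • v = (m : ℚ) • (xK - xL) := by
    intro v hv
    rw [hH] at hv
    induction hv using AddSubgroup.closure_induction with
    | mem x hx =>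
      obtain ⟨j, rfl⟩ := hx
      exact ⟨1, j, by rw [smul_inv_smul₀ (pow_ne_zero _ hq0)]; simp⟩
    | zero => exact ⟨0, 0, by simp⟩
    | add a b ha hb iha ihb =>
      obtain ⟨m1, i1, h1⟩ := iha
      obtain ⟨m2, i2, h2⟩ := ihb
      refine ⟨m1 * q ^ i2 + m2 * q ^ i1, i1 + i2, ?_⟩
      have : ((q:ℚ)^(i1+i2)) • (a + b)
          = (q:ℚ)^i2 • ((q:ℚ)^i1 • a) + (q:ℚ)^i1 • ((q:ℚ)^i2 • b) := by
        module
      rw [this, h1, h2]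
      push_cast
      module
    | neg a ha iha =>
      obtain ⟨m, i, h1⟩ := iha
      refine ⟨-m, i, ?_⟩
      push_cast
      rw [smul_neg, h1, neg_smul]
  -- generic: membership under integer-coefficient ℚ-smul
  have zmem : ∀ (S : AddSubgroup V) (n : ℤ) (v : V), v ∈ S → (n : ℚ) • v ∈ S := by
    intro S n v hv
    rw [Int.cast_smul_eq_zsmul]
    exact AddSubgroup.zsmul_mem S hv n
  -- descent lemma
  have descent : ∀ i : ℕ, ∀ m : ℤ, ∀ k l : V, k ∈ K → l ∈ L →
      (q:ℚ)^i • k = (m:ℚ) • xK → (q:ℚ)^i • l = (m:ℚ) • xL → ∃ n : ℤ, k = n • xK := by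
    intro i
    induction i with
    | zero =>
      intro m k l hk hl h1 h2
      refine ⟨m, ?_⟩
      rw [← Int.cast_smul_eq_zsmul ℚ, ← h1]
      simp
    | succ i ih =>
      intro m k l hk hl h1 h2
      have hm : (q:ℚ)^(i+1) • (k - l) = (m:ℚ) • (xK - xL) := by
        rw [smul_sub, smul_sub, h1, h2]
      have hqm : (q:ℤ) ∣ m := by
        by_contra hnd
        have hcop : IsCoprime (q:ℤ) m :=
          (Nat.prime_iff_prime_int.mp hq).coprime_iff_not_dvd.mpr hnd
        obtain ⟨a, b, hab⟩ := hcop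
        apply hpure
        refine ⟨(b:ℚ) • ((q:ℚ)^i • (k - l)) + (a:ℚ) • (xK - xL), ?_, ?_⟩
        · refine AddSubgroup.add_mem _ (zmem _ b _ ?_) (zmem _ a _ ?_)
          · have : (q:ℚ)^i • (k - l) = ((q^i : ℤ) : ℚ) • (k - l) := by push_cast; ring_nf
            rw [this]
            exact zmem _ _ _ (sub_mem (AddSubgroup.mem_sup_left hk) (AddSubgroup.mem_sup_right hl))
          · exact sub_mem (AddSubgroup.mem_sup_left hxK) (AddSubgroup.mem_sup_right hxL)
        · have key : (q:ℚ) • ((b:ℚ) • ((q:ℚ)^i • (k - l)) + (a:ℚ) • (xK - xL))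
              = (b:ℚ) • ((q:ℚ)^(i+1) • (k - l)) + ((a:ℚ) * q) • (xK - xL) := by
            module
          rw [← Nat.cast_smul_eq_nsmul ℚ, key, hm]
          have hab' : (a:ℚ) * q + (b:ℚ) * m = 1 := by exact_mod_cast hab
          have : (b:ℚ) • ((m:ℚ) • (xK - xL)) + ((a:ℚ) * q) • (xK - xL)
              = ((a:ℚ) * q + (b:ℚ) * m) • (xK - xL) := by module
          rw [this, hab', one_smul]
      obtain ⟨m', rfl⟩ := hqm
      have h1' : (q:ℚ)^i • k = (m':ℚ) • xK := by
        refine smul_right_injective V hq0 (show (q:ℚ) • ((q:ℚ)^i • k) = (q:ℚ) • ((m':ℚ) • xK) from ?_)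
        have e : (q:ℚ) • ((q:ℚ)^i • k) = (q:ℚ)^(i+1) • k := by module
        rw [e, h1]
        push_cast
        module
      have h2' : (q:ℚ)^i • l = (m':ℚ) • xL := by
        refine smul_right_injective V hq0 (show (q:ℚ) • ((q:ℚ)^i • l) = (q:ℚ) • ((m':ℚ) • xL) from ?_)
        have e : (q:ℚ) • ((q:ℚ)^i • l) = (q:ℚ)^(i+1) • l := by module
        rw [e, h2]
        push_cast
        module
      exact ih m' k l hk hl h1' h2'
  constructor
  · apply le_antisymm
    · rintro k ⟨hk, hkM⟩
      obtain ⟨l, hl, h, hh, rfl⟩ := AddSubgroup.mem_sup.mp hkM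
      obtain ⟨m, i, hmi⟩ := hHmem h hh
      have ha : (q:ℚ)^i • (l + h) - (m:ℚ) • xK = (q:ℚ)^i • l - (m:ℚ) • xL := by
        have : (q:ℚ)^i • (l + h) = (q:ℚ)^i • l + (q:ℚ)^i • h := by module
        rw [this, hmi, smul_sub]
        abel
      have hmemK : (q:ℚ)^i • (l + h) - (m:ℚ) • xK ∈ K := by
        refine sub_mem ?_ (zmem _ m _ hxK)
        have : (q:ℚ)^i • (l + h) = ((q^i : ℤ) : ℚ) • (l + h) := by push_cast; ring_nf
        rw [this]; exact zmem _ _ _ hk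
      have hmemL : (q:ℚ)^i • (l + h) - (m:ℚ) • xK ∈ L := by
        rw [ha]
        refine sub_mem ?_ (zmem _ m _ hxL)
        have : (q:ℚ)^i • l = ((q^i : ℤ) : ℚ) • l := by push_cast; ring_nf
        rw [this]; exact zmem _ _ _ hl
      have h0 : (q:ℚ)^i • (l + h) - (m:ℚ) • xK = 0 := by
        have := hKL ▸ (AddSubgroup.mem_inf.mpr ⟨hmemK, hmemL⟩)
        simpa using this
      have h1 : (q:ℚ)^i • (l + h) = (m:ℚ) • xK := by
        rw [sub_eq_zero] at h0; exact h0
      have h2 : (q:ℚ)^i • l = (m:ℚ) • xL := by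
        rw [h0, eq_comm, sub_eq_zero] at ha
        exact ha
      obtain ⟨n, hn⟩ := descent i m (l + h) l hk hl h1 h2
      exact AddSubgroup.mem_zmultiples_iff.mpr ⟨n, hn.symm⟩
    · rw [AddSubgroup.zmultiples_le]
      refine ⟨hxK, ?_⟩
      have hw : xK - xL ∈ H := by
        rw [hH]
        exact AddSubgroup.subset_closure ⟨0, by simp⟩
      have : xK = xL + (xK - xL) := by abel
      rw [this]
      exact AddSubgroup.add_mem _ (AddSubgroup.mem_sup_left hxL) (AddSubgroup.mem_sup_right hw)
  · rw [eq_bot_iff]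
    rintro v ⟨hvL, hvH⟩
    obtain ⟨m, i, hmi⟩ := hHmem v hvH
    have hKmem : (m:ℚ) • xK ∈ K := zmem _ m _ hxK
    have hLmem : (m:ℚ) • xK ∈ L := by
      have : (m:ℚ) • xK = (q:ℚ)^i • v + (m:ℚ) • xL := by
        rw [hmi]; module
      rw [this]
      refine AddSubgroup.add_mem _ ?_ (zmem _ m _ hxL)
      have : (q:ℚ)^i • v = ((q^i : ℤ) : ℚ) • v := by push_cast; ring_nf
      rw [this]; exact zmem _ _ _ hvL
    have h0 : (m:ℚ) • xK = 0 := by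
      have := hKL ▸ (AddSubgroup.mem_inf.mpr ⟨hKmem, hLmem⟩)
      simpa using this
    have hm0 : (m:ℚ) = 0 := by
      rcases smul_eq_zero.mp h0 with h | h
      · exact h
      · exact absurd h hxK0
    have : (q:ℚ)^i • v = 0 := by rw [hmi, hm0, zero_smul]
    have := smul_eq_zero.mp this
    rcases this with h | h
    · exact absurd h (pow_ne_zero _ hq0)
    · simp [h]
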